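/- The function f(p) = −p log₂(p/(p+q)) − q log₂(q/(p+q)) − r log₂(r/(r+s)) − s log₂(s/(r+s)), where p = x₁x₂, q = (1−x₁)(1−x₂), r = x₁(1−x₂), s = (1−x₁)x₂ for x₁, x₂ ∈ [0,1], satisfies f ≤ 1 with equality at x₁ = x₂ = 1/2, and f = 0 whenever x₁ ∈ {0,1} or x₂ ∈ {0,1}. -/

import Mathlib

open Real

namespace FermionEntropyReal

/-- `f(x₁,x₂)` is the two-fermion PSSR entanglement entropy as a function of
the real occupation probabilities `x₁ = |r₁|²`, `x₂ = |r₂|²`, with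
`p = x₁x₂`, `q = (1−x₁)(1−x₂)`, `r = x₁(1−x₂)`, `s = (1−x₁)x₂`. Terms of the
form `0 · log₂(0/c)` are automatically `0`. -/
noncomputable def f (x₁ x₂ : ℝ) : ℝ :=
  let p := x₁ * x₂
  let q := (1 - x₁) * (1 - x₂)
  let r := x₁ * (1 - x₂)
  let s := (1 - x₁) * x₂
  (- (p * Real.logb 2 (p / (p + q))) - q * Real.logb 2 (q / (p + q))
    - r * Real.logb 2 (r / (r + s)) - s * Real.logb 2 (s / (r + s)))

lemma zero_term (c : ℝ) : c * Real.logb 2 (c / c) = 0 := by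
  rcases eq_or_ne c 0 with h | h
  · simp [h]
  · rw [div_self h]; simp

lemma term_le (a b : ℝ) (ha : 0 ≤ a) (hb : 0 ≤ b) :
    -(a * Real.logb 2 (a / (a + b))) - b * Real.logb 2 (b / (a + b)) ≤ a + b := by
  rcases ha.eq_or_lt with rfl | hA
  · rcases hb.eq_or_lt with rfl | hB
    · simp
    · simp [zero_term]; linarith
  rcases hb.eq_or_lt with rfl | hB
  · simp [zero_term]; linarith
  have hab : 0 < a + b := by linarith
  have h2 : (0:ℝ) < Real.log 2 := Real.log_pos (by norm_num)
  have ha2 : Real.log ((a + b) / (2 * a)) ≤ (a + b) / (2 * a) - 1 :=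
    Real.log_le_sub_one_of_pos (by positivity)
  have hb2 : Real.log ((a + b) / (2 * b)) ≤ (a + b) / (2 * b) - 1 :=
    Real.log_le_sub_one_of_pos (by positivity)
  have ea : Real.log (a / (a + b)) = -(Real.log 2 + Real.log ((a + b) / (2 * a))) := by
    rw [Real.log_div hA.ne' hab.ne', Real.log_div hab.ne' (by positivity),
      Real.log_mul (by norm_num) hA.ne']
    ring
  have eb : Real.log (b / (a + b)) = -(Real.log 2 + Real.log ((a + b) / (2 * b))) := by
    rw [Real.log_div hB.ne' hab.ne', Real.log_div hab.ne' (by positivity),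
      Real.log_mul (by norm_num) hB.ne']
    ring
  have ma : a * ((a + b) / (2 * a) - 1) = (a + b) / 2 - a := by
    field_simp
  have mb : b * ((a + b) / (2 * b) - 1) = (a + b) / 2 - b := by
    field_simp
  have key : -(a * Real.log (a / (a + b))) - b * Real.log (b / (a + b)) ≤
      (a + b) * Real.log 2 := by
    rw [ea, eb]
    have h1 : a * Real.log ((a + b) / (2 * a)) ≤ (a + b) / 2 - a := by
      calc a * Real.log ((a + b) / (2 * a)) ≤ a * ((a + b) / (2 * a) - 1) :=
            mul_le_mul_of_nonneg_left ha2 hA.le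
        _ = (a + b) / 2 - a := ma
    have h1' : b * Real.log ((a + b) / (2 * b)) ≤ (a + b) / 2 - b := by
      calc b * Real.log ((a + b) / (2 * b)) ≤ b * ((a + b) / (2 * b) - 1) :=
            mul_le_mul_of_nonneg_left hb2 hB.le
        _ = (a + b) / 2 - b := mb
    nlinarith
  rw [Real.logb, Real.logb]
  have e : -(a * (Real.log (a / (a + b)) / Real.log 2))
      - b * (Real.log (b / (a + b)) / Real.log 2)
      = (-(a * Real.log (a / (a + b))) - b * Real.log (b / (a + b))) / Real.log 2 := by
    ring
  rw [e, div_le_iff₀ h2]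
  exact key

/-- The real-variable optimization underlying the two-fermion PSSR entropy:
for `x₁, x₂ ∈ [0,1]`, `f ≤ 1`, with equality at `x₁ = x₂ = 1/2`; and `f = 0`
whenever `x₁ ∈ {0,1}` or `x₂ ∈ {0,1}`. -/
theorem f_max :
    (∀ x₁ x₂ : ℝ, x₁ ∈ Set.Icc (0:ℝ) 1 → x₂ ∈ Set.Icc (0:ℝ) 1 →
      f x₁ x₂ ≤ 1) ∧
    f (1/2) (1/2) = 1 ∧
    (∀ x₁ x₂ : ℝ, x₁ ∈ Set.Icc (0:ℝ) 1 → x₂ ∈ Set.Icc (0:ℝ) 1 →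
      (x₁ = 0 ∨ x₁ = 1 ∨ x₂ = 0 ∨ x₂ = 1) → f x₁ x₂ = 0) := by
  refine ⟨?_, ?_, ?_⟩
  · intro x₁ x₂ h1 h2
    obtain ⟨h1a, h1b⟩ := h1
    obtain ⟨h2a, h2b⟩ := h2
    have hp : 0 ≤ x₁ * x₂ := mul_nonneg h1a h2a
    have hq : 0 ≤ (1 - x₁) * (1 - x₂) := mul_nonneg (by linarith) (by linarith)
    have hr : 0 ≤ x₁ * (1 - x₂) := mul_nonneg h1a (by linarith)
    have hs : 0 ≤ (1 - x₁) * x₂ := mul_nonneg (by linarith) h2a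
    have H1 := term_le (x₁ * x₂) ((1 - x₁) * (1 - x₂)) hp hq
    have H2 := term_le (x₁ * (1 - x₂)) ((1 - x₁) * x₂) hr hs
    have hsum : x₁ * x₂ + (1 - x₁) * (1 - x₂) + (x₁ * (1 - x₂) + (1 - x₁) * x₂) = 1 := by
      ring
    show -(x₁ * x₂ * Real.logb 2 ((x₁ * x₂) / (x₁ * x₂ + (1 - x₁) * (1 - x₂))))
      - (1 - x₁) * (1 - x₂) * Real.logb 2 (((1 - x₁) * (1 - x₂)) / (x₁ * x₂ + (1 - x₁) * (1 - x₂)))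
      - x₁ * (1 - x₂) * Real.logb 2 ((x₁ * (1 - x₂)) / (x₁ * (1 - x₂) + (1 - x₁) * x₂))
      - (1 - x₁) * x₂ * Real.logb 2 (((1 - x₁) * x₂) / (x₁ * (1 - x₂) + (1 - x₁) * x₂)) ≤ 1
    linarith
  · have hlog : Real.logb 2 (2⁻¹ : ℝ) = -1 := by
      rw [Real.logb_inv, Real.logb_self_eq_one] <;> norm_num
    show -((1/2 * (1/2) : ℝ) * Real.logb 2 ((1/2 * (1/2)) / (1/2 * (1/2) + (1 - 1/2) * (1 - 1/2))))
      - (1 - 1/2) * (1 - 1/2) * Real.logb 2 (((1 - 1/2) * (1 - 1/2)) / (1/2 * (1/2) + (1 - 1/2) * (1 - 1/2)))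
      - 1/2 * (1 - 1/2) * Real.logb 2 ((1/2 * (1 - 1/2)) / (1/2 * (1 - 1/2) + (1 - 1/2) * (1/2)))
      - (1 - 1/2) * (1/2) * Real.logb 2 (((1 - 1/2) * (1/2)) / (1/2 * (1 - 1/2) + (1 - 1/2) * (1/2))) = 1
    have hlog' : Real.logb 2 ((1:ℝ)/2) = -1 := by rw [one_div]; exact hlog
    norm_num
    linarith [hlog']
  · intro x₁ x₂ h1 h2 hcase
    rcases hcase with rfl | rfl | rfl | rfl <;>
      simp [f, zero_term]
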